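/- arXiv:1211.5755 — 2 statements merged into one kernel-verified Lean document; each statement's English description precedes it below -/
import Mathlib

section
/- Let P ⊂ ℝ^N be an integral convex polytope of dimension d, and let n ≥ μ_hole(P), where μ_hole(P) is the maximal degree of an element of Box(P) (the set of holes of P), or 1 if Box(P) is empty. Then the dilated polytope nP possesses the integer decomposition property. In particular μ_idp(P) ≤ μ_hole(P). -/
open scoped BigOperators Pointwise

/-- Points of `ℝ^N`. -/
abbrev Pt (N : ℕ) := Fin N → ℝ

/-- A point has integer coordinates. -/
def IsLat {N : ℕ} (x : Pt N) : Prop := ∀ i, ∃ z : ℤ, x i = (z : ℝ)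

/-- Lattice points of a set. -/
def latPts {N : ℕ} (P : Set (Pt N)) : Set (Pt N) := {x ∈ P | IsLat x}

/-- The dilated polytope `kP`. -/
def dil {N : ℕ} (k : ℕ) (P : Set (Pt N)) : Set (Pt N) := (k : ℝ) • P

/-- `α` is a sum of `k` lattice points of `P`. -/
def DecomposesIn {N : ℕ} (P : Set (Pt N)) (k : ℕ) (α : Pt N) : Prop :=
  ∃ f : Fin k → Pt N, (∀ i, f i ∈ latPts P) ∧ α = ∑ i, f i

/-- The integer decomposition property. -/
def HasIDP {N : ℕ} (P : Set (Pt N)) : Prop :=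
  ∀ k : ℕ, 0 < k → ∀ α ∈ latPts (dil k P), DecomposesIn P k α

/-- Very ampleness: decomposition holds for all sufficiently large `k`. -/
def VeryAmple {N : ℕ} (P : Set (Pt N)) : Prop :=
  ∃ k₀ : ℕ, ∀ k, k₀ ≤ k → ∀ α ∈ latPts (dil k P), DecomposesIn P k α

/-- An integral convex polytope: the convex hull of finitely many lattice points
(which include all its vertices). -/
def IsIntegralPolytope {N : ℕ} (P : Set (Pt N)) : Prop :=
  ∃ V : Finset (Pt N), (∀ v ∈ V, IsLat v) ∧ P = convexHull ℝ (V : Set (Pt N))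

/-- Dimension of a polytope: the rank of the direction of its affine span. -/
noncomputable def polyDim {N : ℕ} (P : Set (Pt N)) : ℕ :=
  Module.finrank ℝ (affineSpan ℝ P).direction

/-- Lattice points of the cone `C(P) ⊂ ℝ^{N+1}` generated by `P̃ = P × {1}`;
a point of `ℝ^{N+1}` is represented as a pair `(x, deg)`. -/
def coneLat {N : ℕ} (P : Set (Pt N)) : Set (Pt N × ℝ) :=
  {p | (∃ (m : ℕ) (c : Fin m → ℝ) (w : Fin m → Pt N),
        (∀ i, 0 ≤ c i ∧ w i ∈ P) ∧ p.1 = ∑ i, c i • w i ∧ p.2 = ∑ i, c i)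
    ∧ IsLat p.1 ∧ ∃ z : ℤ, p.2 = (z : ℝ)}

/-- The monoid `ℤ_{≥0}(P̃ ∩ ℤ^{N+1})` generated by the degree-one lattice points of the cone. -/
def genMonoid {N : ℕ} (P : Set (Pt N)) : Set (Pt N × ℝ) :=
  {p | ∃ (m : ℕ) (f : Fin m → Pt N), (∀ i, f i ∈ latPts P) ∧
        p.1 = ∑ i, f i ∧ p.2 = (m : ℝ)}

/-- `H` is the minimal Hilbert basis of the cone `C(P)`. -/
def IsMinHilbertBasis {N : ℕ} (P : Set (Pt N)) (H : Set (Pt N × ℝ)) : Prop :=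
  (H.Finite ∧ H ⊆ coneLat P ∧
      coneLat P ⊆ (AddSubmonoid.closure H : Set (Pt N × ℝ))) ∧
  ∀ H' : Set (Pt N × ℝ),
    (H'.Finite ∧ H' ⊆ coneLat P ∧
      coneLat P ⊆ (AddSubmonoid.closure H' : Set (Pt N × ℝ))) → H ⊆ H'

/-- `v` lists the vertices of an empty `d`-simplex contained in `P`. -/
def EmptySimplexIn {N : ℕ} (P : Set (Pt N)) (d : ℕ) (v : Fin (d+1) → Pt N) : Prop :=
  (∀ i, v i ∈ latPts P) ∧ AffineIndependent ℝ v ∧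
    ∀ x ∈ convexHull ℝ (Set.range v), IsLat x → x ∈ Set.range v

/-- `Box(S)` of a simplex with vertex list `v`: lattice points
`Σ rᵢ (vᵢ, 1)` with `0 ≤ rᵢ < 1`. -/
def boxSimplex {N d : ℕ} (v : Fin (d+1) → Pt N) : Set (Pt N × ℝ) :=
  {p | ∃ r : Fin (d+1) → ℝ, (∀ i, 0 ≤ r i ∧ r i < 1) ∧
      p.1 = ∑ i, r i • v i ∧ p.2 = ∑ i, r i ∧ IsLat p.1 ∧ ∃ z : ℤ, p.2 = (z : ℝ)}

/-- `Box(P)`: holes of `P`, i.e. box points of empty `d`-simplices in `P` that are not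
nonnegative integer combinations of `P̃ ∩ ℤ^{N+1}`. -/
def boxP {N : ℕ} (P : Set (Pt N)) (d : ℕ) : Set (Pt N × ℝ) :=
  (⋃ v ∈ {v : Fin (d+1) → Pt N | EmptySimplexIn P d v}, boxSimplex v) \ genMonoid P

/-- Ehrhart counting function `|nP ∩ ℤ^N|`. -/
noncomputable def ehr {N : ℕ} (P : Set (Pt N)) (n : ℕ) : ℕ := (latPts (dil n P)).ncard

/-- The `δ`-vector of a `d`-dimensional polytope, via finite differences of the
Ehrhart counting function. -/
noncomputable def deltaVec {N : ℕ} (P : Set (Pt N)) (d i : ℕ) : ℤ :=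
  ∑ j ∈ Finset.range (i+1), (-1)^j * ((d+1).choose j) * (ehr P (i - j) : ℤ)

lemma isLat_zero {N : ℕ} : IsLat (0 : Pt N) := fun i => ⟨0, by simp⟩

lemma IsLat.add {N : ℕ} {x y : Pt N} (hx : IsLat x) (hy : IsLat y) : IsLat (x + y) := by
  intro i; obtain ⟨a, ha⟩ := hx i; obtain ⟨b, hb⟩ := hy i
  exact ⟨a + b, by simp [ha, hb]⟩

lemma IsLat.sub {N : ℕ} {x y : Pt N} (hx : IsLat x) (hy : IsLat y) : IsLat (x - y) := by
  intro i; obtain ⟨a, ha⟩ := hx i; obtain ⟨b, hb⟩ := hy i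
  exact ⟨a - b, by simp [ha, hb]⟩

lemma IsLat.nsmul {N : ℕ} {x : Pt N} (hx : IsLat x) (a : ℕ) : IsLat ((a : ℝ) • x) := by
  intro i; obtain ⟨z, hz⟩ := hx i
  exact ⟨a * z, by simp [hz]⟩

lemma isLat_sum {N : ℕ} {ι : Type*} (s : Finset ι) (f : ι → Pt N)
    (h : ∀ i ∈ s, IsLat (f i)) : IsLat (∑ i ∈ s, f i) := by
  classical
  induction s using Finset.induction_on with
  | empty => simpa using isLat_zero
  | insert _ _ hi ih =>
    rw [Finset.sum_insert hi]
    exact (h _ (Finset.mem_insert_self _ _)).add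
      (ih fun i his => h i (Finset.mem_insert_of_mem his))

lemma finite_latPts {N : ℕ} {s : Set (Pt N)} (hs : Bornology.IsBounded s) :
    (latPts s).Finite := by
  classical
  obtain ⟨R, hR⟩ := hs.subset_closedBall 0
  have key : latPts s ⊆ (fun z : Fin N → ℤ => fun i => (z i : ℝ)) ''
      (Set.Icc (fun _ => -⌈R⌉) (fun _ => ⌈R⌉)) := by
    rintro x ⟨hxs, hxl⟩
    refine ⟨fun i => round (x i), ?_, ?_⟩
    · constructor <;> intro i
      · obtain ⟨z, hz⟩ := hxl i
        have hb : |x i| ≤ R := by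
          have := hR hxs
          rw [Metric.mem_closedBall, dist_zero_right] at this
          exact (norm_le_pi_norm x i).trans this
        show -⌈R⌉ ≤ round (x i)
        rw [hz, round_intCast]
        have h2 : -R ≤ (z : ℝ) := by
          have := (abs_le.mp (hz ▸ hb)).1; linarith
        have : (-(⌈R⌉) : ℝ) ≤ (z : ℝ) := le_trans (by
          have := Int.le_ceil R; push_cast; linarith) h2
        exact_mod_cast this
      · obtain ⟨z, hz⟩ := hxl i
        have hb : |x i| ≤ R := by
          have := hR hxs
          rw [Metric.mem_closedBall, dist_zero_right] at this
          exact (norm_le_pi_norm x i).trans this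
        show round (x i) ≤ ⌈R⌉
        rw [hz, round_intCast]
        have h1 : (z : ℝ) ≤ R := by
          have := (abs_le.mp (hz ▸ hb)).2; linarith
        have : (z : ℝ) ≤ (⌈R⌉ : ℝ) := h1.trans (Int.le_ceil R)
        exact_mod_cast this
    · funext i
      obtain ⟨z, hz⟩ := hxl i
      simp [hz, round_intCast]
  exact Set.Finite.subset ((Set.finite_Icc _ _).image _) key
lemma mem_convexHull_range_iff {N n : ℕ} (v : Fin n → Pt N) (x : Pt N) :
    x ∈ convexHull ℝ (Set.range v) ↔
      ∃ c : Fin n → ℝ, (∀ i, 0 ≤ c i) ∧ ∑ i, c i = 1 ∧ x = ∑ i, c i • v i := by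
  classical
  constructor
  · intro hx
    rw [convexHull_range_eq_exists_affineCombination] at hx
    obtain ⟨s, w, hw0, hw1, hwx⟩ := hx
    refine ⟨fun i => if i ∈ s then w i else 0, fun i => by by_cases h : i ∈ s <;> simp [h, hw0 i], ?_, ?_⟩
    · rw [Finset.sum_ite_mem, Finset.univ_inter, hw1]
    · rw [← hwx, Finset.affineCombination_eq_linear_combination _ _ _ hw1, eq_comm]
      calc ∑ i, (if i ∈ s then w i else 0) • v i
          = ∑ i ∈ s, (if i ∈ s then w i else 0) • v i :=
            (Finset.sum_subset (Finset.subset_univ s) (fun i _ hi => by simp [hi])).symm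
        _ = ∑ i ∈ s, w i • v i := Finset.sum_congr rfl (fun i hi => by simp [hi])
  · rintro ⟨c, hc0, hc1, rfl⟩
    exact (convex_convexHull ℝ _).sum_mem (fun i _ => hc0 i) hc1
      (fun i _ => subset_convexHull ℝ _ ⟨i, rfl⟩)

lemma affind_unique {N n : ℕ} {v : Fin n → Pt N} (hv : AffineIndependent ℝ v)
    {a b : Fin n → ℝ} (hs : ∑ i, a i = ∑ i, b i)
    (hp : ∑ i, a i • v i = ∑ i, b i • v i) : a = b := by
  have h := affineIndependent_iff.mp hv Finset.univ (a - b)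
    (by simpa [Finset.sum_sub_distrib, sub_eq_zero] using hs)
    (by simpa [Pi.sub_apply, sub_smul, Finset.sum_sub_distrib, sub_eq_zero] using hp)
  funext i
  have := h i (Finset.mem_univ i)
  simpa [sub_eq_zero] using this

lemma affind_snoc {N n : ℕ} {v : Fin (n+1) → Pt N} (hv : AffineIndependent ℝ v)
    {p : Pt N} (hp : p ∉ affineSpan ℝ (Set.range v)) :
    AffineIndependent ℝ (Fin.snoc v p : Fin (n+2) → Pt N) := by
  classical
  rw [affineIndependent_iff_of_fintype]
  intro w hw hvs
  rw [Finset.univ.weightedVSub_eq_linear_combination hw] at hvs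
  rw [Fin.sum_univ_castSucc] at hw hvs
  simp only [Fin.snoc_castSucc, Fin.snoc_last] at hvs
  by_cases hlast : w (Fin.last (n+1)) = 0
  · have hw' : ∑ i : Fin (n+1), w i.castSucc = 0 := by rw [hlast] at hw; linarith
    have hv' : ∑ i : Fin (n+1), w i.castSucc • v i = 0 := by
      rw [hlast, zero_smul, add_zero] at hvs; exact hvs
    have hz := affineIndependent_iff.mp hv Finset.univ _ hw' hv'
    intro i
    refine Fin.lastCases hlast (fun j => hz j (Finset.mem_univ j)) i
  · exfalso
    apply hp
    set W := w (Fin.last (n+1)) with hW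
    have hsum : ∑ i : Fin (n+1), w i.castSucc = -W := by linarith
    have hcs : ∑ i : Fin (n+1), (-(w i.castSucc) / W) = 1 := by
      rw [← Finset.sum_div, Finset.sum_neg_distrib, hsum, neg_neg, div_self hlast]
    have h1 : ∑ i : Fin (n+1), w i.castSucc • v i = -(W • p) :=
      eq_neg_of_add_eq_zero_left hvs
    have hpe : ∑ i : Fin (n+1), (-(w i.castSucc) / W) • v i = p := by
      have step : ∑ i : Fin (n+1), (-(w i.castSucc) / W) • v i
          = (-(1:ℝ)/W) • ∑ i : Fin (n+1), w i.castSucc • v i := by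
        rw [Finset.smul_sum]
        refine Finset.sum_congr rfl fun i _ => ?_
        rw [smul_smul]
        congr 1
        field_simp
      rw [step, h1, smul_neg, smul_smul]
      have : (-(1:ℝ)/W) * W = -1 := by field_simp
      rw [this]
      simp
    have hmem := affineCombination_mem_affineSpan hcs v
    rwa [Finset.affineCombination_eq_linear_combination _ _ _ hcs, hpe] at hmem
lemma exists_extend {N : ℕ} (V : Finset (Pt N)) (d : ℕ)
    (hd : Module.finrank ℝ (affineSpan ℝ (V : Set (Pt N))).direction = d) :
    ∀ (j m : ℕ) (v : Fin (m+1) → Pt N), Set.range v ⊆ (V : Set (Pt N)) →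
      AffineIndependent ℝ v → m + j = d →
      ∃ u : Fin (d+1) → Pt N, Set.range u ⊆ (V : Set (Pt N)) ∧ AffineIndependent ℝ u ∧
        Set.range v ⊆ Set.range u := by
  intro j
  induction j with
  | zero =>
    intro m v hsub hind hmj
    obtain rfl : m = d := by omega
    exact ⟨v, hsub, hind, subset_rfl⟩
  | succ j ih =>
    intro m v hsub hind hmj
    have hex : ∃ p ∈ V, p ∉ affineSpan ℝ (Set.range v) := by
      by_contra hcon
      push_neg at hcon
      have hVs : (V : Set (Pt N)) ⊆ (affineSpan ℝ (Set.range v) : Set (Pt N)) :=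
        fun p hp => hcon p hp
      have hle : affineSpan ℝ (V : Set (Pt N)) ≤ affineSpan ℝ (Set.range v) :=
        affineSpan_le.mpr hVs
      have hfr : d ≤ Module.finrank ℝ (affineSpan ℝ (Set.range v)).direction := by
        rw [← hd]; exact Submodule.finrank_mono (AffineSubspace.direction_le hle)
      rw [direction_affineSpan, hind.finrank_vectorSpan (Fintype.card_fin _)] at hfr
      omega
    obtain ⟨p, hpV, hpn⟩ := hex
    have hind' := affind_snoc hind hpn
    have hsub' : Set.range (Fin.snoc v p : Fin (m+2) → Pt N) ⊆ (V : Set (Pt N)) := by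
      rintro x ⟨i, rfl⟩
      refine Fin.lastCases ?_ (fun k => ?_) i
      · simpa using hpV
      · simpa using hsub ⟨k, rfl⟩
    obtain ⟨u, h1, h2, h3⟩ := ih (m+1) _ hsub' hind' (by omega)
    refine ⟨u, h1, h2, fun x hx => h3 ?_⟩
    obtain ⟨i, rfl⟩ := hx
    exact ⟨i.castSucc, by simp⟩

lemma exists_simplex {N d : ℕ} (V : Finset (Pt N))
    (hd : Module.finrank ℝ (affineSpan ℝ (V : Set (Pt N))).direction = d)
    {x : Pt N} (hx : x ∈ convexHull ℝ (V : Set (Pt N))) :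
    ∃ v : Fin (d+1) → Pt N, Set.range v ⊆ (V : Set (Pt N)) ∧ AffineIndependent ℝ v ∧
      x ∈ convexHull ℝ (Set.range v) := by
  classical
  rw [convexHull_eq_union] at hx
  simp only [Set.mem_iUnion] at hx
  obtain ⟨t, hts, hti, hxt⟩ := hx
  have htne : t.Nonempty := by
    rcases Finset.eq_empty_or_nonempty t with rfl | h
    · simp at hxt
    · exact h
  obtain ⟨m, hm⟩ : ∃ m, t.card = m + 1 :=
    ⟨t.card - 1, by have := Finset.card_pos.mpr htne; omega⟩
  let e : Fin (m+1) ≃ t := (t.equivFin.trans (finCongr hm)).symm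
  set v : Fin (m+1) → Pt N := fun i => ((e i : Pt N)) with hv
  have hvi : AffineIndependent ℝ v := hti.comp_embedding e.toEmbedding
  have hrange : Set.range v = (t : Set (Pt N)) := by
    ext y
    constructor
    · rintro ⟨i, rfl⟩; exact (e i).2
    · intro hy; exact ⟨e.symm ⟨y, hy⟩, by simp [hv]⟩
  have hsub : Set.range v ⊆ (V : Set (Pt N)) := hrange ▸ hts
  have hmd : m ≤ d := by
    have hle : vectorSpan ℝ (Set.range v) ≤ vectorSpan ℝ (V : Set (Pt N)) :=
      vectorSpan_mono ℝ (hrange ▸ hts)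
    have := Submodule.finrank_mono hle
    rw [hvi.finrank_vectorSpan (Fintype.card_fin _)] at this
    rw [direction_affineSpan] at hd
    omega
  obtain ⟨u, h1, h2, h3⟩ := exists_extend V d
    hd (d - m) m v hsub hvi (by omega)
  exact ⟨u, h1, h2, convexHull_mono h3 (hrange ▸ hxt)⟩
lemma refine_to_empty {N d : ℕ} {P : Set (Pt N)} (hP : Convex ℝ P) :
    ∀ (M : ℕ) (v : Fin (d+1) → Pt N), (∀ i, v i ∈ latPts P) → AffineIndependent ℝ v →
      (latPts (convexHull ℝ (Set.range v))).ncard ≤ M →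
      ∀ x ∈ convexHull ℝ (Set.range v),
      ∃ u : Fin (d+1) → Pt N, EmptySimplexIn P d u ∧ x ∈ convexHull ℝ (Set.range u) := by
  classical
  intro M
  induction M with
  | zero =>
    intro v hvP hvi hcard x hx
    exfalso
    have h0 : v 0 ∈ latPts (convexHull ℝ (Set.range v)) :=
      ⟨subset_convexHull ℝ _ ⟨0, rfl⟩, (hvP 0).2⟩
    have hfin : (latPts (convexHull ℝ (Set.range v))).Finite :=
      finite_latPts (isBounded_convexHull.mpr (Set.finite_range v).isBounded)
    have := (Set.ncard_pos hfin).mpr ⟨v 0, h0⟩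
    omega
  | succ M ih =>
    intro v hvP hvi hcard x hx
    by_cases hemp : ∀ y ∈ convexHull ℝ (Set.range v), IsLat y → y ∈ Set.range v
    · exact ⟨v, ⟨hvP, hvi, hemp⟩, hx⟩
    push_neg at hemp
    obtain ⟨w, hwh, hwl, hwn⟩ := hemp
    obtain ⟨τ, hτ0, hτ1, hτw⟩ := (mem_convexHull_range_iff v w).mp hwh
    obtain ⟨c, hc0, hc1, hcx⟩ := (mem_convexHull_range_iff v x).mp hx
    have hTne : (Finset.univ.filter (fun i => 0 < τ i)).Nonempty := by
      by_contra hcon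
      rw [Finset.not_nonempty_iff_eq_empty, Finset.filter_eq_empty_iff] at hcon
      have hle : ∑ i, τ i ≤ 0 :=
        Finset.sum_nonpos (fun i _ => not_lt.mp (hcon (Finset.mem_univ i)))
      rw [hτ1] at hle; linarith
    obtain ⟨j, hjT, hjmin⟩ := Finset.exists_min_image _ (fun i => c i / τ i) hTne
    have hτj : 0 < τ j := (Finset.mem_filter.mp hjT).2
    set s := c j / τ j with hs
    have hs0 : 0 ≤ s := div_nonneg (hc0 j) hτj.le
    have hsτj : s * τ j = c j := div_mul_cancel₀ _ (ne_of_gt hτj)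
    have hmin : ∀ i, 0 < τ i → s * τ i ≤ c i := by
      intro i hi
      have h := hjmin i (Finset.mem_filter.mpr ⟨Finset.mem_univ i, hi⟩)
      calc s * τ i ≤ (c i / τ i) * τ i := mul_le_mul_of_nonneg_right h hi.le
        _ = c i := div_mul_cancel₀ _ (ne_of_gt hi)
    set u : Fin (d+1) → Pt N := Function.update v j w with hu
    have huj : u j = w := Function.update_self j w v
    have hune : ∀ i, i ≠ j → u i = v i := fun i hij => Function.update_of_ne hij w v
    -- τ j < 1
    have hτjle : τ j ≤ 1 := by
      have := Finset.single_le_sum (f := τ) (fun i _ => hτ0 i) (Finset.mem_univ j)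
      rw [hτ1] at this; exact this
    have hτj1 : τ j < 1 := by
      rcases lt_or_eq_of_le hτjle with h | h
      · exact h
      exfalso; apply hwn
      have hrest : ∑ i ∈ Finset.univ.erase j, τ i = 0 := by
        have h2 := Finset.add_sum_erase Finset.univ τ (Finset.mem_univ j)
        rw [hτ1, h] at h2; linarith
      have hz : ∀ i ∈ Finset.univ.erase j, τ i = 0 := by
        intro i hi
        exact (Finset.sum_eq_zero_iff_of_nonneg (fun i _ => hτ0 i)).mp hrest i hi
      have : w = v j := by
        rw [hτw, Finset.sum_eq_single_of_mem j (Finset.mem_univ j)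
          (fun i _ hij => by
            rw [hz i (Finset.mem_erase.mpr ⟨hij, Finset.mem_univ i⟩), zero_smul]),
          h, one_smul]
      exact ⟨j, this.symm⟩
    -- transfer of combinations from u to v
    have transfer : ∀ g : Fin (d+1) → ℝ,
        (∑ i, ((if i = j then 0 else g i) + g j * τ i)) = ∑ i, g i ∧
        ∑ i, ((if i = j then 0 else g i) + g j * τ i) • v i = ∑ i, g i • u i := by
      intro g
      have h1 : ∑ i, (if i = j then (0:ℝ) else g i) = ∑ i ∈ Finset.univ.erase j, g i := by
        rw [← Finset.add_sum_erase _ (fun i => if i = j then (0:ℝ) else g i)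
          (Finset.mem_univ j), if_pos rfl, zero_add]
        exact Finset.sum_congr rfl (fun i hi => if_neg (Finset.ne_of_mem_erase hi))
      constructor
      · rw [Finset.sum_add_distrib, ← Finset.mul_sum, hτ1, mul_one, h1,
          Finset.sum_erase_add _ _ (Finset.mem_univ j)]
      · have expand : (∑ i, ((if i = j then (0:ℝ) else g i) + g j * τ i) • v i)
            = (∑ i, (if i = j then (0:ℝ) else g i) • v i) + ∑ i, (g j * τ i) • v i := by
          rw [← Finset.sum_add_distrib]
          exact Finset.sum_congr rfl (fun i _ => add_smul _ _ _)
        rw [expand]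
        have h2 : ∑ i, (if i = j then (0:ℝ) else g i) • v i
            = ∑ i ∈ Finset.univ.erase j, g i • v i := by
          rw [← Finset.add_sum_erase _ (fun i => (if i = j then (0:ℝ) else g i) • v i)
            (Finset.mem_univ j), if_pos rfl, zero_smul, zero_add]
          exact Finset.sum_congr rfl (fun i hi => by
            rw [if_neg (Finset.ne_of_mem_erase hi)])
        have h3 : ∑ i, (g j * τ i) • v i = g j • w := by
          rw [hτw, Finset.smul_sum]
          exact Finset.sum_congr rfl (fun i _ => (smul_smul _ _ _).symm)
        have h4 : ∑ i, g i • u i = g j • w + ∑ i ∈ Finset.univ.erase j, g i • v i := by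
          rw [← Finset.add_sum_erase _ (fun i => g i • u i) (Finset.mem_univ j), huj]
          congr 1
          exact Finset.sum_congr rfl (fun i hi => by
            rw [hune i (Finset.ne_of_mem_erase hi)])
        rw [h2, h3, h4]
        abel
    -- affine independence of u
    have hui : AffineIndependent ℝ u := by
      rw [affineIndependent_iff_of_fintype]
      intro g hg hgs
      rw [Finset.univ.weightedVSub_eq_linear_combination hg] at hgs
      obtain ⟨t1, t2⟩ := transfer g
      have hz := affineIndependent_iff.mp hvi Finset.univ _
        (by rw [t1, hg]) (by rw [t2, hgs])
      have hgj : g j = 0 := by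
        have h5 := hz j (Finset.mem_univ j)
        rw [if_pos rfl, zero_add] at h5
        exact (mul_eq_zero.mp h5).resolve_right (ne_of_gt hτj)
      intro i
      by_cases hij : i = j
      · rw [hij]; exact hgj
      · have := hz i (Finset.mem_univ i)
        simp only [if_neg hij, hgj, zero_mul, add_zero] at this
        exact this
    -- v j is not in the hull of u
    have hvj_not : v j ∉ convexHull ℝ (Set.range u) := by
      intro hmem
      obtain ⟨e', he'0, he'1, he'e⟩ := (mem_convexHull_range_iff u (v j)).mp hmem
      obtain ⟨t1, t2⟩ := transfer e'
      set E : Fin (d+1) → ℝ := fun i => (if i = j then 0 else e' i) + e' j * τ i with hE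
      set b : Fin (d+1) → ℝ := fun i => if i = j then 1 else 0 with hb
      have hbs : ∑ i, b i = 1 := by simp [hb]
      have hbv : ∑ i, b i • v i = v j := by
        rw [Finset.sum_eq_single_of_mem j (Finset.mem_univ j)
          (fun i _ hij => by simp [hb, hij])]
        simp [hb]
      have hEb : E = b := by
        apply affind_unique hvi
        · rw [t1, he'1, hbs]
        · rw [t2, ← he'e, hbv]
      have hEj : E j = 1 := by rw [hEb]; simp [hb]
      have hEj' : e' j * τ j = 1 := by
        have h5 := hEj
        rw [hE] at h5
        simp only [if_pos rfl, if_true, eq_self_iff_true, zero_add] at h5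
        exact h5
      have he'le : e' j ≤ 1 := by
        have := Finset.single_le_sum (f := e') (fun i _ => he'0 i) (Finset.mem_univ j)
        rw [he'1] at this; exact this
      nlinarith [he'0 j, hτ0 j]
    -- new coefficients for x
    set c' : Fin (d+1) → ℝ := fun i => if i = j then s else c i - s * τ i with hc'
    have hc'0 : ∀ i, 0 ≤ c' i := by
      intro i
      by_cases hij : i = j
      · simp [hc', hij, hs0]
      · simp only [hc', if_neg hij, sub_nonneg]
        rcases lt_or_ge 0 (τ i) with h | h
        · exact hmin i h
        · have hτz : τ i = 0 := le_antisymm h (hτ0 i)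
          rw [hτz, mul_zero]; exact hc0 i
    have hc'sum : ∑ i, c' i = 1 := by
      have h2 : c j + ∑ i ∈ Finset.univ.erase j, c i = 1 := by
        rw [Finset.add_sum_erase _ c (Finset.mem_univ j), hc1]
      have h3 : τ j + ∑ i ∈ Finset.univ.erase j, τ i = 1 := by
        rw [Finset.add_sum_erase _ τ (Finset.mem_univ j), hτ1]
      rw [← Finset.add_sum_erase _ c' (Finset.mem_univ j)]
      have hcj : c' j = s := by simp [hc']
      have h1 : ∑ i ∈ Finset.univ.erase j, c' i
          = ∑ i ∈ Finset.univ.erase j, (c i - s * τ i) :=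
        Finset.sum_congr rfl (fun i hi => by
          simp [hc', if_neg (Finset.ne_of_mem_erase hi)])
      rw [hcj, h1, Finset.sum_sub_distrib, ← Finset.mul_sum]
      nlinarith [hsτj]
    have hxu : x ∈ convexHull ℝ (Set.range u) := by
      rw [mem_convexHull_range_iff]
      refine ⟨c', hc'0, hc'sum, ?_⟩
      -- x = ∑ c' i • u i via transfer applied to c'
      obtain ⟨t1, t2⟩ := transfer c'
      -- the v-side weights of c' equal c
      have hc'def : ∀ i, c' i = if i = j then s else c i - s * τ i := fun i => rfl
      have hCeq : ∀ i, ((if i = j then (0:ℝ) else c' i) + c' j * τ i) = c i := by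
        intro i
        have hcj : c' j = s := by rw [hc'def, if_pos rfl]
        by_cases hij : i = j
        · rw [hij, if_pos rfl, zero_add, hcj, hsτj]
        · rw [if_neg hij, hcj, hc'def, if_neg hij]; ring
      rw [hcx, ← t2]
      exact Finset.sum_congr rfl (fun i _ => by rw [hCeq i])
    -- strict decrease of lattice points
    have hhull : convexHull ℝ (Set.range u) ⊆ convexHull ℝ (Set.range v) := by
      apply convexHull_min _ (convex_convexHull ℝ _)
      rintro y ⟨i, rfl⟩
      by_cases hij : i = j
      · rw [hij, huj]; exact hwh
      · rw [hune i hij]; exact subset_convexHull ℝ _ ⟨i, rfl⟩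
    have hfinv : (latPts (convexHull ℝ (Set.range v))).Finite :=
      finite_latPts (isBounded_convexHull.mpr (Set.finite_range v).isBounded)
    have hsubl : latPts (convexHull ℝ (Set.range u)) ⊆ latPts (convexHull ℝ (Set.range v)) :=
      fun y hy => ⟨hhull hy.1, hy.2⟩
    have hss : latPts (convexHull ℝ (Set.range u)) ⊂ latPts (convexHull ℝ (Set.range v)) := by
      rw [Set.ssubset_iff_of_subset hsubl]
      exact ⟨v j, ⟨subset_convexHull ℝ _ ⟨j, rfl⟩, (hvP j).2⟩, fun hc => hvj_not hc.1⟩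
    have hlt := Set.ncard_lt_ncard hss hfinv
    have huP : ∀ i, u i ∈ latPts P := by
      intro i
      by_cases hij : i = j
      · rw [hij, huj]
        refine ⟨?_, hwl⟩
        have : convexHull ℝ (Set.range v) ⊆ P :=
          convexHull_min (fun y ⟨i, hy⟩ => hy ▸ (hvP i).1) hP
        exact this hwh
      · rw [hune i hij]; exact hvP i
    exact ih u huP hui (by omega) x hxu
lemma exists_le_sum {ι : Type*} [Fintype ι] :
    ∀ (s : ℕ) (a : ι → ℕ), s ≤ ∑ i, a i → ∃ b : ι → ℕ, (∀ i, b i ≤ a i) ∧ ∑ i, b i = s := by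
  classical
  intro s
  induction s with
  | zero => intro a _; exact ⟨0, fun i => Nat.zero_le _, by simp⟩
  | succ s ih =>
    intro a hs
    obtain ⟨b, hb, hbs⟩ := ih a (Nat.le_of_succ_le hs)
    have hex : ∃ i, b i < a i := by
      by_contra hcon
      push_neg at hcon
      have := Finset.sum_le_sum (fun i (_ : i ∈ Finset.univ) => hcon i)
      omega
    obtain ⟨i0, hi0⟩ := hex
    refine ⟨Function.update b i0 (b i0 + 1), fun i => ?_, ?_⟩
    · by_cases h : i = i0
      · rw [h, Function.update_self]; omega
      · rw [Function.update_of_ne h]; exact hb i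
    · rw [Finset.sum_update_of_mem (Finset.mem_univ i0)]
      rw [Finset.sum_eq_sum_sdiff_singleton_add (Finset.mem_univ i0) b] at hbs
      omega

lemma exists_matrix {ι : Type*} [Fintype ι] :
    ∀ (k : ℕ) (sizes : Fin k → ℕ) (a : ι → ℕ), ∑ i, a i = ∑ i, sizes i →
      ∃ b : Fin k → ι → ℕ, (∀ i, ∑ j, b i j = sizes i) ∧ ∀ j, ∑ i, b i j = a j := by
  classical
  intro k
  induction k with
  | zero =>
    intro sizes a ha
    have h0 : ∑ i, sizes i = 0 := by simp
    rw [h0] at ha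
    have hz := Finset.sum_eq_zero_iff.mp ha
    exact ⟨fun _ _ => 0, fun i => i.elim0, fun j => by
      simp [hz j (Finset.mem_univ j)]⟩
  | succ k ih =>
    intro sizes a ha
    have h0 : sizes 0 ≤ ∑ i, a i := by
      rw [ha, Fin.sum_univ_succ]; exact Nat.le_add_right _ _
    obtain ⟨b0, hb0le, hb0s⟩ := exists_le_sum (sizes 0) a h0
    have hsub : ∑ j, (a j - b0 j) = ∑ i : Fin k, sizes i.succ := by
      have h1 : ∑ j, (a j - b0 j) + ∑ j, b0 j = ∑ j, a j := by
        rw [← Finset.sum_add_distrib]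
        exact Finset.sum_congr rfl (fun j _ => Nat.sub_add_cancel (hb0le j))
      rw [Fin.sum_univ_succ] at ha
      omega
    obtain ⟨b', hrow, hcol⟩ := ih (fun i => sizes i.succ) (fun j => a j - b0 j) hsub
    refine ⟨Fin.cons b0 b', fun i => ?_, fun j => ?_⟩
    · refine Fin.cases ?_ (fun i' => ?_) i
      · simpa using hb0s
      · simpa using hrow i'
    · rw [Fin.sum_univ_succ]
      simp only [Fin.cons_zero, Fin.cons_succ]
      have h2 := hcol j
      have h3 := hb0le j
      omega

lemma conic_mem_dil {N : ℕ} {P : Set (Pt N)} (hP : Convex ℝ P) {n : ℕ} (hn : 0 < n)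
    {ι : Type*} [Fintype ι] (e : ι → ℝ) (p : ι → Pt N) (he0 : ∀ i, 0 ≤ e i)
    (hp : ∀ i, p i ∈ P) (hes : ∑ i, e i = (n : ℝ)) :
    (∑ i, e i • p i) ∈ dil n P := by
  have hn0 : (n : ℝ) ≠ 0 := Nat.cast_ne_zero.mpr hn.ne'
  have hmem : (∑ i, (e i / n) • p i) ∈ P :=
    hP.sum_mem (fun i _ => div_nonneg (he0 i) (Nat.cast_nonneg n))
      (by rw [← Finset.sum_div, hes, div_self hn0]) (fun i _ => hp i)
  show _ ∈ (n : ℝ) • P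
  refine Set.mem_smul_set.mpr ⟨∑ i, (e i / n) • p i, hmem, ?_⟩
  rw [Finset.smul_sum]
  refine Finset.sum_congr rfl (fun i _ => ?_)
  rw [smul_smul]
  congr 1
  field_simp

lemma decompose_aux {N : ℕ} {P : Set (Pt N)} (hP : Convex ℝ P)
    {k n : ℕ} (hk : 0 < k) (hn : 0 < n)
    {ι : Type*} [Fintype ι] (u : ι → Pt N) (hu : ∀ j, u j ∈ latPts P)
    (A : ι → ℕ) (γ : Pt N) (hγlat : IsLat γ)
    {m : ℕ} (hm : m ≤ n)
    {L : ℕ} (sγ : Fin L → ℝ) (y : Fin L → Pt N)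
    (hsγ0 : ∀ l, 0 ≤ sγ l) (hy : ∀ l, y l ∈ P)
    (hγ : γ = ∑ l, sγ l • y l) (hγs : ∑ l, sγ l = (m : ℝ))
    (hA : ∑ j, A j + m = k * n)
    {α : Pt N} (hα : α = γ + ∑ j, (A j : ℝ) • u j) :
    DecomposesIn (dil n P) k α := by
  classical
  obtain ⟨k', rfl⟩ := Nat.exists_eq_succ_of_ne_zero hk.ne'
  set sizes : Fin (k'+1) → ℕ := Fin.cons (n - m) (fun _ => n) with hsizes
  have hsz : ∑ j, A j = ∑ i, sizes i := by
    rw [Fin.sum_univ_succ]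
    simp only [hsizes, Fin.cons_zero, Fin.cons_succ, Finset.sum_const, Finset.card_univ,
      Fintype.card_fin, smul_eq_mul]
    have hexp : (k' + 1) * n = k' * n + n := by ring
    have hexp2 : k'.succ * n = k' * n + n := Nat.succ_mul _ _
    omega
  obtain ⟨b, hrow, hcol⟩ := exists_matrix (k'+1) sizes A hsz
  set f : Fin (k'+1) → Pt N :=
    fun i => (if i = 0 then γ else 0) + ∑ j, (b i j : ℝ) • u j with hf
  have hfdef : ∀ i, f i = (if i = 0 then γ else 0) + ∑ j, (b i j : ℝ) • u j := fun i => rfl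
  refine ⟨f, fun i => ⟨?_, ?_⟩, ?_⟩
  · -- membership in dil n P
    refine Fin.cases ?_ (fun i' => ?_) i
    · have hfi : f 0 = ∑ jj : Fin L ⊕ ι,
          (Sum.elim sγ (fun j => ((b 0 j : ℕ) : ℝ))) jj • (Sum.elim y u) jj := by
        rw [hfdef, if_pos rfl, Fintype.sum_sum_type]
        simp only [Sum.elim_inl, Sum.elim_inr]
        rw [hγ]
      rw [hfi]
      apply conic_mem_dil hP hn
      · intro jj; cases jj with
        | inl l => exact hsγ0 l
        | inr j => exact Nat.cast_nonneg _
      · intro jj; cases jj with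
        | inl l => exact hy l
        | inr j => exact (hu j).1
      · rw [Fintype.sum_sum_type]
        simp only [Sum.elim_inl, Sum.elim_inr]
        rw [hγs]
        have hbi : ∑ j, ((b 0 j : ℕ) : ℝ) = ((n - m : ℕ) : ℝ) := by
          rw [← Nat.cast_sum]
          norm_cast
          rw [hrow 0]
          simp [hsizes]
        rw [hbi, Nat.cast_sub hm]
        ring
    · have hfi : f i'.succ = ∑ j, ((b i'.succ j : ℕ) : ℝ) • u j := by
        rw [hfdef, if_neg (Fin.succ_ne_zero i'), zero_add]
      rw [hfi]
      apply conic_mem_dil hP hn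
      · intro j; exact Nat.cast_nonneg _
      · intro j; exact (hu j).1
      · have : ∑ j, ((b i'.succ j : ℕ) : ℝ) = ((n : ℕ) : ℝ) := by
          rw [← Nat.cast_sum]
          norm_cast
          rw [hrow i'.succ]
          simp [hsizes]
        rw [this]
  · -- lattice
    rw [hfdef]
    refine IsLat.add ?_ (isLat_sum _ _ (fun j _ => ((hu j).2).nsmul (b i j)))
    by_cases h0 : i = 0
    · rw [if_pos h0]; exact hγlat
    · rw [if_neg h0]; exact isLat_zero
  · -- sum
    rw [hα]
    have hsplit : ∑ i, f i = (∑ i : Fin (k'+1), (if i = 0 then γ else 0))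
        + ∑ i : Fin (k'+1), ∑ j, (b i j : ℝ) • u j := by
      rw [← Finset.sum_add_distrib]
    rw [hsplit, Finset.sum_ite_eq' Finset.univ (0 : Fin (k'+1)) (fun _ => γ)]
    simp only [Finset.mem_univ, if_true]
    congr 1
    rw [Finset.sum_comm]
    refine Finset.sum_congr rfl (fun j _ => ?_)
    rw [← Finset.sum_smul, ← Nat.cast_sum, hcol j]
/-- if every hole of `P` has degree at most `n` (and `n ≥ 1`),
then the dilation `nP` possesses (IDP); in particular `μ_idp(P) ≤ μ_hole(P)`. -/
theorem idp_of_ge_muHole {N d : ℕ} (P : Set (Pt N))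
    (hP : IsIntegralPolytope P) (hdim : polyDim P = d)
    (n : ℕ) (hn1 : 1 ≤ n) (hn : ∀ p ∈ boxP P d, p.2 ≤ (n : ℝ)) :
    HasIDP (dil n P) := by
  classical
  obtain ⟨V, hVlat, hPV⟩ := hP
  have hconv : Convex ℝ P := by rw [hPV]; exact convex_convexHull ℝ _
  have hn0 : 0 < n := hn1
  intro k hk α hα
  obtain ⟨hαmem, hαlat⟩ := hα
  have hdil : dil k (dil n P) = dil (k*n) P := by
    show (k:ℝ) • ((n:ℝ) • P) = ((k*n : ℕ):ℝ) • P
    rw [Nat.cast_mul, mul_smul]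
  rw [hdil] at hαmem
  obtain ⟨x0, hx0P, hx0⟩ := Set.mem_smul_set.mp hαmem
  have hd : Module.finrank ℝ (affineSpan ℝ (V : Set (Pt N))).direction = d := by
    rw [← hdim, polyDim, hPV, affineSpan_convexHull]
  have hx0V : x0 ∈ convexHull ℝ (V : Set (Pt N)) := by rw [← hPV]; exact hx0P
  obtain ⟨v0, hv0V, hv0i, hx0v⟩ := exists_simplex V hd hx0V
  have hv0P : ∀ i, v0 i ∈ latPts P := by
    intro i
    refine ⟨?_, hVlat _ (hv0V ⟨i, rfl⟩)⟩
    rw [hPV]; exact subset_convexHull ℝ _ (hv0V ⟨i, rfl⟩)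
  obtain ⟨v, hvE, hxv⟩ := refine_to_empty hconv
    ((latPts (convexHull ℝ (Set.range v0))).ncard) v0 hv0P hv0i le_rfl x0 hx0v
  obtain ⟨hvP, hvi, hvempty⟩ := hvE
  obtain ⟨c, hc0, hc1, hx0c⟩ := (mem_convexHull_range_iff v x0).mp hxv
  set K := k * n with hK
  have hK0 : 0 < K := Nat.mul_pos hk hn0
  set C : Fin (d+1) → ℝ := fun i => (K : ℝ) * c i with hC
  have hCdef : ∀ i, C i = (K:ℝ) * c i := fun i => rfl
  have hC0 : ∀ i, 0 ≤ C i := fun i => mul_nonneg (Nat.cast_nonneg K) (hc0 i)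
  have hαC : α = ∑ i, C i • v i := by
    rw [← hx0, hx0c, Finset.smul_sum]
    exact Finset.sum_congr rfl (fun i _ => (smul_smul _ _ _))
  set a : Fin (d+1) → ℕ := fun i => ⌊C i⌋₊ with ha
  have hadef : ∀ i, a i = ⌊C i⌋₊ := fun i => rfl
  set r : Fin (d+1) → ℝ := fun i => C i - (a i : ℝ) with hr
  have hrdef : ∀ i, r i = C i - (a i : ℝ) := fun i => rfl
  have hr0 : ∀ i, 0 ≤ r i := by
    intro i; rw [hrdef, hadef]
    have := Nat.floor_le (hC0 i); linarith
  have hr1 : ∀ i, r i < 1 := by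
    intro i; rw [hrdef, hadef]
    have := Nat.lt_floor_add_one (C i); linarith
  have hCsplit : ∀ i, C i = (a i : ℝ) + r i := by intro i; rw [hrdef]; ring
  have hβsplit : α = (∑ i, r i • v i) + ∑ i, (a i : ℝ) • v i := by
    rw [hαC, ← Finset.sum_add_distrib]
    refine Finset.sum_congr rfl (fun i _ => ?_)
    rw [hCsplit i, add_smul]
    exact add_comm _ _
  have hβlat : IsLat (∑ i, r i • v i) := by
    have heq : (∑ i, r i • v i) = α - ∑ i, (a i : ℝ) • v i := by rw [hβsplit]; abel
    rw [heq]
    exact hαlat.sub (isLat_sum _ _ (fun i _ => ((hvP i).2).nsmul (a i)))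
  have hasum_le : ∑ i, a i ≤ K := by
    have h1 : ((∑ i, a i : ℕ) : ℝ) ≤ (K : ℝ) := by
      rw [Nat.cast_sum]
      calc ∑ i, (a i : ℝ) ≤ ∑ i, C i := by
            refine Finset.sum_le_sum (fun i _ => ?_)
            rw [hadef]; exact Nat.floor_le (hC0 i)
        _ = (K:ℝ) := by
            simp only [hCdef]
            rw [← Finset.mul_sum, hc1, mul_one]
    exact_mod_cast h1
  set m := K - ∑ i, a i with hm
  have hKm : ∑ i, a i + m = K := by omega
  have hrsum : ∑ i, r i = (m : ℝ) := by
    have h2 : ∑ i, r i = (K:ℝ) - ∑ i, (a i : ℝ) := by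
      simp only [hrdef]
      rw [Finset.sum_sub_distrib]
      congr 1
      simp only [hCdef]
      rw [← Finset.mul_sum, hc1, mul_one]
    rw [h2, ← Nat.cast_sum, hm, Nat.cast_sub hasum_le]
  by_cases hgen : ((∑ i, r i • v i, ∑ i, r i) : Pt N × ℝ) ∈ genMonoid P
  · obtain ⟨m', f', hf'lat, hf'sum, hf'deg⟩ := hgen
    dsimp only at hf'sum hf'deg
    have hm' : m' = m := by
      have h3 : (m' : ℝ) = (m : ℝ) := by rw [← hrsum, hf'deg]
      exact_mod_cast h3
    refine decompose_aux hconv hk hn0 (Sum.elim v f') ?_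
      (Sum.elim a (fun _ => 1)) 0 isLat_zero (m := 0) (Nat.zero_le n)
      (Fin.elim0 : Fin 0 → ℝ) (Fin.elim0 : Fin 0 → Pt N)
      (fun l => l.elim0) (fun l => l.elim0) (by simp) (by simp) ?_ ?_
    · intro jj; cases jj with
      | inl i => exact hvP i
      | inr l => exact hf'lat l
    · rw [Fintype.sum_sum_type]
      simp only [Sum.elim_inl, Sum.elim_inr, Finset.sum_const, Finset.card_univ,
        Fintype.card_fin, smul_eq_mul, mul_one]
      omega
    · rw [Fintype.sum_sum_type]
      simp only [Sum.elim_inl, Sum.elim_inr, Nat.cast_one, one_smul]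
      rw [zero_add, hβsplit, hf'sum]
      exact add_comm _ _
  · have hbox : ((∑ i, r i • v i, ∑ i, r i) : Pt N × ℝ) ∈ boxP P d := by
      refine ⟨?_, hgen⟩
      refine Set.mem_biUnion (show v ∈ {v | EmptySimplexIn P d v} from ⟨hvP, hvi, hvempty⟩) ?_
      exact ⟨r, fun i => ⟨hr0 i, hr1 i⟩, rfl, rfl, hβlat, ⟨(m:ℤ), by rw [hrsum]; norm_cast⟩⟩
    have hdeg := hn _ hbox
    have hmn : m ≤ n := by
      have h4 : (m:ℝ) ≤ (n:ℝ) := by rw [← hrsum]; exact hdeg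
      exact_mod_cast h4
    refine decompose_aux hconv hk hn0 v hvP a (∑ i, r i • v i) hβlat hmn r v hr0
      (fun l => (hvP l).1) rfl hrsum ?_ hβsplit
    omega
end

section
/- Let P ⊂ ℝ^N be an integral convex polytope of dimension d with Box(P) nonempty, and let m denote the maximal degree of an element of Box(P). Then (d+1−m)(P ∖ ∂P) contains a lattice point; consequently the largest index i with δᵢ ≠ 0 in the δ-vector of P is at least m, i.e., μ_hole(P) ≤ μ_Ehr(P). -/
open scoped BigOperators Pointwise

attribute [local instance] AffineSubspace.toNormedAddTorsor

open Finset in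
lemma mem_intrinsic_of_pos {N d : ℕ} (P : Set (Pt N))
    (hconv : Convex ℝ P) (hdim : Module.finrank ℝ (affineSpan ℝ P).direction = d)
    (v : Fin (d+1) → Pt N) (hvP : ∀ i, v i ∈ P) (hind : AffineIndependent ℝ v)
    (t : Fin (d+1) → ℝ) (ht : ∀ i, 0 < t i) (hsum : ∑ i, t i = 1) :
    (∑ i, t i • v i) ∈ intrinsicInterior ℝ P := by
  haveI : Nonempty (affineSpan ℝ P) := ⟨⟨v 0, subset_affineSpan ℝ P (hvP 0)⟩⟩
  let v' : Fin (d+1) → affineSpan ℝ P := fun i => ⟨v i, subset_affineSpan ℝ P (hvP i)⟩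
  have hcoe : ((affineSpan ℝ P).subtype) ∘ v' = v := rfl
  have hind' : AffineIndependent ℝ v' := by
    apply AffineIndependent.of_comp (affineSpan ℝ P).subtype
    rwa [hcoe]
  have htot : affineSpan ℝ (Set.range v') = ⊤ := by
    rw [hind'.affineSpan_eq_top_iff_card_eq_finrank_add_one]
    simp [hdim]
  let b : AffineBasis (Fin (d+1)) ℝ (affineSpan ℝ P) := ⟨v', hind', htot⟩
  have hb : ⇑b = v' := rfl
  have hsum' : ∑ i, t i = 1 := hsum
  let y' : affineSpan ℝ P := Finset.univ.affineCombination ℝ v' t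
  have hcoords : ∀ i, b.coord i y' = t i := by
    intro i
    have := b.coord_apply_combination_of_mem (i := i) (s := Finset.univ)
      (Finset.mem_univ i) (w := t) (by simpa using hsum)
    rwa [hb] at this
  have hcoey : (y' : Pt N) = ∑ i, t i • v i := by
    have h1 : (affineSpan ℝ P).subtype y' = Finset.univ.affineCombination ℝ v t := by
      rw [Finset.map_affineCombination _ v' t (by simpa using hsum), hcoe]
    have h2 : Finset.univ.affineCombination ℝ v t = ∑ i, t i • v i := by
      rw [Finset.affineCombination_eq_linear_combination _ _ _ (by simpa using hsum)]
    rw [← h2, ← h1]; rfl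
  have hU : ∀ z : affineSpan ℝ P, (∀ i, 0 < b.coord i z) → (z : Pt N) ∈ P := by
    intro z hz
    have hz1 : ∑ i, b.coord i z = 1 := b.sum_coord_apply_eq_one z
    have hmem : Finset.univ.affineCombination ℝ v (fun i => b.coord i z)
        ∈ convexHull ℝ (Set.range v) :=
      affineCombination_mem_convexHull (fun i _ => (hz i).le) (by simpa using hz1)
    have hz2 : (z : Pt N) = Finset.univ.affineCombination ℝ v (fun i => b.coord i z) := by
      conv_lhs => rw [show (z : Pt N) = (affineSpan ℝ P).subtype z from rfl,
        ← b.affineCombination_coord_eq_self z]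
      rw [hb, Finset.map_affineCombination _ v' _ (by simpa using hz1), hcoe]
    rw [hz2]
    exact convexHull_min (Set.range_subset_iff.2 hvP) hconv hmem
  have hopen : IsOpen {z : affineSpan ℝ P | ∀ i, 0 < b.coord i z} := by
    have : {z : affineSpan ℝ P | ∀ i, 0 < b.coord i z}
        = ⋂ i, (b.coord i) ⁻¹' Set.Ioi 0 := by ext; simp
    rw [this]
    have hc : ∀ i, Continuous (b.coord i) := fun i => by
      exact AffineMap.continuous_linear_iff.1 (b.coord i).linear.continuous_of_finiteDimensional
    exact isOpen_iInter_of_finite fun i => isOpen_Ioi.preimage (hc i)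
  have hyint : y' ∈ interior ((↑) ⁻¹' P : Set (affineSpan ℝ P)) :=
    mem_interior.2 ⟨_, fun z hz => hU z hz, hopen, fun i => by rw [hcoords]; exact ht i⟩
  rw [mem_intrinsicInterior]
  exact ⟨y', hyint, hcoey⟩


/-- if `Box(P)` is nonempty with maximal degree `m`, then
`(d+1-m)(P ∖ ∂P)` contains a lattice point; consequently
`μ_hole(P) ≤ μ_Ehr(P)`, phrased via Ehrhart reciprocity. -/
theorem hole_le_ehr {N d : ℕ} (P : Set (Pt N))
    (hP : IsIntegralPolytope P) (hdim : polyDim P = d)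
    (m : ℕ) (hm : IsGreatest {t : ℝ | ∃ p ∈ boxP P d, p.2 = t} (m : ℝ)) :
    (∃ x ∈ dil (d + 1 - m) (intrinsicInterior ℝ P), IsLat x) ∧
    ∀ k₀ : ℕ,
      IsLeast {k : ℕ | 0 < k ∧ ∃ x ∈ dil k (intrinsicInterior ℝ P), IsLat x} k₀ →
      m ≤ d + 1 - k₀ := by
  obtain ⟨V, hVlat, hPhull⟩ := hP
  have hconv : Convex ℝ P := hPhull ▸ convex_convexHull ℝ _
  obtain ⟨p, hpbox, hpdeg⟩ := hm.1
  obtain ⟨hpmem, hpnot⟩ := hpbox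
  rw [Set.mem_iUnion₂] at hpmem
  obtain ⟨v, hv, hpsimp⟩ := hpmem
  obtain ⟨r, hr, hp1, hp2, hlat1, z, hz⟩ := hpsimp
  obtain ⟨hvlat, hind, hempty⟩ := hv
  have hvP : ∀ i, v i ∈ P := fun i => (hvlat i).1
  have hvL : ∀ i, IsLat (v i) := fun i => (hvlat i).2
  have hsumr : ∑ i, r i = (m : ℝ) := by rw [← hp2, hpdeg]
  -- m ≥ 1
  have hm1 : 1 ≤ m := by
    rcases Nat.eq_zero_or_pos m with h0 | h; swap; · exact h
    exfalso
    apply hpnot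
    have hr0 : ∀ i ∈ Finset.univ, r i = 0 := by
      rw [← Finset.sum_eq_zero_iff_of_nonneg (fun i _ => (hr i).1)]
      rw [hsumr, h0]; norm_num
    refine ⟨0, Fin.elim0, fun i => i.elim0, ?_, ?_⟩
    · rw [hp1, Finset.sum_congr rfl (fun i hi => by rw [hr0 i hi, zero_smul])]
      simp
    · rw [hp2, Finset.sum_congr rfl hr0]; simp
  -- m ≤ d
  have hmd : m ≤ d := by
    have hlt : (m : ℝ) < (d : ℝ) + 1 := by
      rw [← hsumr]
      calc ∑ i, r i < ∑ _i : Fin (d+1), (1 : ℝ) :=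
            Finset.sum_lt_sum_of_nonempty Finset.univ_nonempty (fun i _ => (hr i).2)
        _ = (d : ℝ) + 1 := by simp
    have : (m : ℝ) < ((d + 1 : ℕ) : ℝ) := by push_cast; linarith
    exact Nat.lt_succ_iff.1 (by exact_mod_cast this)
  set c : ℝ := (d : ℝ) + 1 - m with hcdef
  have hc0 : 0 < c := by
    have : (m : ℝ) ≤ d := by exact_mod_cast hmd
    simp only [hcdef]; linarith
  have hcast : ((d + 1 - m : ℕ) : ℝ) = c := by
    rw [hcdef]
    have : m ≤ d + 1 := by omega
    push_cast [this]; ring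
  set t : Fin (d+1) → ℝ := fun i => (1 - r i) / c with htdef
  have ht : ∀ i, 0 < t i := fun i => div_pos (by linarith [(hr i).2]) hc0
  have hsumt : ∑ i, t i = 1 := by
    rw [htdef, ← Finset.sum_div]
    have : ∑ i, (1 - r i) = c := by
      rw [Finset.sum_sub_distrib, hsumr]; simp [hcdef]
    rw [this, div_self hc0.ne']
  have hy := mem_intrinsic_of_pos P hconv (by rw [← hdim]; rfl) v hvP hind t ht hsumt
  set y : Pt N := ∑ i, t i • v i with hydef
  set x : Pt N := ∑ i, (1 - r i) • v i with hxdef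
  have hxy : x = c • y := by
    rw [hydef, hxdef, Finset.smul_sum]
    refine Finset.sum_congr rfl (fun i _ => ?_)
    rw [smul_smul, htdef, mul_div_cancel₀ _ hc0.ne']
  have hxident : x = (∑ i, v i) - p.1 := by
    rw [hxdef, hp1, ← Finset.sum_sub_distrib]
    refine Finset.sum_congr rfl (fun i _ => ?_)
    rw [sub_smul, one_smul]
  have hxlat : IsLat x := by
    intro j
    obtain ⟨w, hw⟩ := hlat1 j
    have hs : ∀ i, ∃ z : ℤ, v i j = z := fun i => hvL i j
    choose zs hzs using hs
    refine ⟨∑ i, zs i - w, ?_⟩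
    rw [hxident]
    simp only [Pi.sub_apply, Finset.sum_apply, hzs, hw]
    push_cast; ring
  have hxdil : x ∈ dil (d + 1 - m) (intrinsicInterior ℝ P) := by
    refine Set.mem_smul_set.2 ⟨y, hy, ?_⟩
    rw [hcast, ← hxy]
  refine ⟨⟨x, hxdil, hxlat⟩, ?_⟩
  intro k₀ hk₀
  have hmem : (d + 1 - m) ∈ {k : ℕ | 0 < k ∧ ∃ x ∈ dil k (intrinsicInterior ℝ P), IsLat x} :=
    ⟨by omega, x, hxdil, hxlat⟩
  have := hk₀.2 hmem
  omega
end
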